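/- For any weighted (dissimilarity) graph G=(V,E,w) on n vertices, every tree T output by the average-linkage algorithm satisfies val(T) ≥ (n/2)·Σ_{e∈E} w(e); consequently val(T) ≥ OPT/2, i.e., average-linkage is a 2-approximation for the dissimilarity objective. -/

import Mathlib

open scoped BigOperators

attribute [local instance] Classical.propDecidable

noncomputable section

/-! ### Cluster trees -/

/-- A (binary, rooted) hierarchical-clustering tree whose leaves are labelled by
vertices of `V`. -/
inductive ClusterTree (V : Type) : Type where
  | leaf : V → ClusterTree V
  | node : ClusterTree V → ClusterTree V → ClusterTree V

namespace ClusterTree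

variable {V : Type}

/-- The list of leaf labels of the tree (left-to-right). -/
def leavesList : ClusterTree V → List V
  | leaf v => [v]
  | node L R => leavesList L ++ leavesList R

/-- The set of leaf labels of the tree. -/
def leaves [DecidableEq V] (T : ClusterTree V) : Finset V :=
  T.leavesList.toFinset

end ClusterTree

section Defs

variable {V : Type}

/-- `T` is a cluster tree for the whole (finite) vertex set `V`: its leaves are
pairwise distinct and exhaust the vertices. -/
def IsClusterTree [DecidableEq V] [Fintype V] (T : ClusterTree V) : Prop :=
  T.leavesList.Nodup ∧ T.leaves = Finset.univ

/-- `IsSubtreeOf s T` : `s` occurs as a rooted subtree of `T`. -/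
def IsSubtreeOf : ClusterTree V → ClusterTree V → Prop
  | s, ClusterTree.leaf v => s = ClusterTree.leaf v
  | s, ClusterTree.node L R => s = ClusterTree.node L R ∨ IsSubtreeOf s L ∨ IsSubtreeOf s R

/-- The subtree of `T` rooted at the lowest common ancestor of the leaves `x` and `y`. -/
def lcaSubtree [DecidableEq V] : ClusterTree V → V → V → ClusterTree V
  | ClusterTree.leaf v, _, _ => ClusterTree.leaf v
  | ClusterTree.node L R, x, y =>
    if x ∈ L.leaves ∧ y ∈ L.leaves then lcaSubtree L x y
    else if x ∈ R.leaves ∧ y ∈ R.leaves then lcaSubtree R x y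
    else ClusterTree.node L R

/-- `w(A, B) = ∑_{a ∈ A, b ∈ B} w a b`. -/
def cutWeight (w : V → V → ℝ) (A B : Finset V) : ℝ := ∑ a ∈ A, ∑ b ∈ B, w a b

/-- `w(A) = ∑_{a, b ∈ A} w a b` (ordered pairs; each edge counted twice). -/
def innerWeight (w : V → V → ℝ) (A : Finset V) : ℝ := ∑ a ∈ A, ∑ b ∈ A, w a b

/-- `∑_{e ∈ E} w(e)`, for a symmetric weight function with zero diagonal. -/
def totalWeight [Fintype V] (w : V → V → ℝ) : ℝ := (∑ u : V, ∑ v : V, w u v) / 2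

/-- Cost of a cluster tree: each internal node `N` with children `N₁, N₂`
contributes `w(V(N₁), V(N₂)) · g(|V(N₁)|, |V(N₂)|)`. -/
def treeCost [DecidableEq V] (w : V → V → ℝ) (g : ℕ → ℕ → ℝ) : ClusterTree V → ℝ
  | ClusterTree.leaf _ => 0
  | ClusterTree.node L R =>
      cutWeight w L.leaves R.leaves * g L.leaves.card R.leaves.card
        + treeCost w g L + treeCost w g R

/-- Dasgupta's cost (= `treeCost` with `g (a, b) = a + b`). -/
def dasguptaCost [DecidableEq V] (w : V → V → ℝ) : ClusterTree V → ℝ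
  | ClusterTree.leaf _ => 0
  | ClusterTree.node L R =>
      ((L.leaves.card + R.leaves.card : ℕ) : ℝ) * cutWeight w L.leaves R.leaves
        + dasguptaCost w L + dasguptaCost w R

/-! ### Generating trees -/

/-- `T` is a generating tree for the similarity graph `w` : there is a nonnegative
weight function on the internal nodes, non-increasing from leaves towards the root,
realizing every edge weight at the corresponding LCA. -/
def IsGenerating [DecidableEq V] (w : V → V → ℝ) (T : ClusterTree V) : Prop :=
  ∃ W : ClusterTree V → ℝ,
    (∀ s, IsSubtreeOf s T → 0 ≤ W s) ∧
    (∀ L R, IsSubtreeOf (ClusterTree.node L R) T →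
      ∀ s, IsSubtreeOf s L ∨ IsSubtreeOf s R → W (ClusterTree.node L R) ≤ W s) ∧
    (∀ x y, x ∈ T.leaves → y ∈ T.leaves → x ≠ y → w x y = W (lcaSubtree T x y))

/-- Generating tree in the dissimilarity setting (weights non-decreasing from
leaves towards the root). -/
def IsGeneratingDissim [DecidableEq V] (w : V → V → ℝ) (T : ClusterTree V) : Prop :=
  ∃ W : ClusterTree V → ℝ,
    (∀ s, IsSubtreeOf s T → 0 ≤ W s) ∧
    (∀ L R, IsSubtreeOf (ClusterTree.node L R) T →
      ∀ s, IsSubtreeOf s L ∨ IsSubtreeOf s R → W s ≤ W (ClusterTree.node L R)) ∧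
    (∀ x y, x ∈ T.leaves → y ∈ T.leaves → x ≠ y → w x y = W (lcaSubtree T x y))

/-- Strictly generating tree (similarity setting). -/
def IsStrictlyGenerating [DecidableEq V] (w : V → V → ℝ) (T : ClusterTree V) : Prop :=
  ∃ W : ClusterTree V → ℝ,
    (∀ s, IsSubtreeOf s T → 0 ≤ W s) ∧
    (∀ L R, IsSubtreeOf (ClusterTree.node L R) T →
      ∀ s, IsSubtreeOf s L ∨ IsSubtreeOf s R → W (ClusterTree.node L R) < W s) ∧
    (∀ x y, x ∈ T.leaves → y ∈ T.leaves → x ≠ y → w x y = W (lcaSubtree T x y))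

/-- Strictly generating tree (dissimilarity setting). -/
def IsStrictlyGeneratingDissim [DecidableEq V] (w : V → V → ℝ) (T : ClusterTree V) : Prop :=
  ∃ W : ClusterTree V → ℝ,
    (∀ s, IsSubtreeOf s T → 0 ≤ W s) ∧
    (∀ L R, IsSubtreeOf (ClusterTree.node L R) T →
      ∀ s, IsSubtreeOf s L ∨ IsSubtreeOf s R → W s < W (ClusterTree.node L R)) ∧
    (∀ x y, x ∈ T.leaves → y ∈ T.leaves → x ≠ y → w x y = W (lcaSubtree T x y))

/-! ### Ultrametrics and ground-truth inputs -/

/-- `d` is an ultrametric on `V`. -/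
def IsUltrametric (d : V → V → ℝ) : Prop :=
  (∀ x, d x x = 0) ∧ (∀ x y, d x y = 0 → x = y) ∧ (∀ x y, d x y = d y x) ∧
  (∀ x y, 0 ≤ d x y) ∧ (∀ x y z, d x y ≤ max (d x z) (d y z))

/-- `w` is a similarity graph generated from an ultrametric via a
non-increasing nonnegative function `f`. -/
def GeneratedFromUltrametric (w : V → V → ℝ) : Prop :=
  ∃ (d : V → V → ℝ) (f : ℝ → ℝ),
    IsUltrametric d ∧
    (∀ a b : ℝ, 0 ≤ a → a ≤ b → f b ≤ f a) ∧
    (∀ a : ℝ, 0 ≤ a → 0 ≤ f a) ∧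
    (∀ x y : V, x ≠ y → w x y = f (d x y))

/-- `w` is a dissimilarity graph generated from an ultrametric via a
non-decreasing nonnegative function `f`. -/
def GeneratedFromUltrametricDissim (w : V → V → ℝ) : Prop :=
  ∃ (d : V → V → ℝ) (f : ℝ → ℝ),
    IsUltrametric d ∧
    (∀ a b : ℝ, 0 ≤ a → a ≤ b → f a ≤ f b) ∧
    (∀ a : ℝ, 0 ≤ a → 0 ≤ f a) ∧
    (∀ x y : V, x ≠ y → w x y = f (d x y))

/-- `w` is a similarity graph generated from a *minimal* ultrametric:
pairs with equal weights are at equal ultrametric distance. -/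
def GeneratedFromMinimalUltrametric (w : V → V → ℝ) : Prop :=
  ∃ (d : V → V → ℝ) (f : ℝ → ℝ),
    IsUltrametric d ∧
    (∀ a b : ℝ, 0 ≤ a → a ≤ b → f b ≤ f a) ∧
    (∀ a : ℝ, 0 ≤ a → 0 ≤ f a) ∧
    (∀ x y : V, x ≠ y → w x y = f (d x y)) ∧
    (∀ u v u' v' : V, u ≠ v → u' ≠ v' → f (d u v) = f (d u' v') → d u v = d u' v')

/-- Dissimilarity analogue of `GeneratedFromMinimalUltrametric`. -/
def GeneratedFromMinimalUltrametricDissim (w : V → V → ℝ) : Prop :=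
  ∃ (d : V → V → ℝ) (f : ℝ → ℝ),
    IsUltrametric d ∧
    (∀ a b : ℝ, 0 ≤ a → a ≤ b → f a ≤ f b) ∧
    (∀ a : ℝ, 0 ≤ a → 0 ≤ f a) ∧
    (∀ x y : V, x ≠ y → w x y = f (d x y)) ∧
    (∀ u v u' v' : V, u ≠ v → u' ≠ v' → f (d u v) = f (d u' v') → d u v = d u' v')

/-- `w` is a `δ`-adversarially-perturbed (similarity) ground-truth input. -/
def IsDeltaPerturbedGroundTruth (w : V → V → ℝ) (δ : ℝ) : Prop :=
  ∃ (d : V → V → ℝ) (f : ℝ → ℝ),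
    IsUltrametric d ∧
    (∀ a b : ℝ, 0 ≤ a → a ≤ b → f b ≤ f a) ∧
    (∀ a : ℝ, 0 ≤ a → 0 ≤ f a) ∧
    (∀ x y : V, x ≠ y → f (d x y) ≤ w x y ∧ w x y ≤ δ * f (d x y))

end Defs

/-- The unit-weight clique on `V`. -/
def cliqueW (V : Type) [DecidableEq V] : V → V → ℝ := fun x y => if x = y then 0 else 1

/-- Admissibility of a cost function (similarity setting): on every similarity graph
generated from a minimal ultrametric, a cluster tree minimizes the cost
iff it is a generating tree. -/
def Admissible (g : ℕ → ℕ → ℝ) : Prop :=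
  ∀ (V : Type) [Fintype V] [DecidableEq V] (w : V → V → ℝ),
    GeneratedFromMinimalUltrametric w →
    ∀ T : ClusterTree V, IsClusterTree T →
      ((∀ T' : ClusterTree V, IsClusterTree T' → treeCost w g T ≤ treeCost w g T')
        ↔ IsGenerating w T)

/-- Admissibility of a value function (dissimilarity setting): on every dissimilarity
graph generated from a minimal ultrametric, a cluster tree maximizes the value
iff it is a generating tree. -/
def AdmissibleDissim (g : ℕ → ℕ → ℝ) : Prop :=
  ∀ (V : Type) [Fintype V] [DecidableEq V] (w : V → V → ℝ),
    GeneratedFromMinimalUltrametricDissim w →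
    ∀ T : ClusterTree V, IsClusterTree T →
      ((∀ T' : ClusterTree V, IsClusterTree T' → treeCost w g T' ≤ treeCost w g T)
        ↔ IsGeneratingDissim w T)

/-! ### Agglomerative (linkage) algorithms, modelled as a nondeterministic relation -/

/-- The initial state of an agglomerative algorithm: all singleton trees. -/
def initState (V : Type) [Fintype V] : Multiset (ClusterTree V) :=
  Finset.univ.val.map ClusterTree.leaf

/-- One merge step of a generic linkage algorithm: merge two candidate trees whose
leaf-set distance `D` is best (w.r.t. `better a b` = "`a` is at least as good as `b`")
among all candidate pairs; any tie-breaking choice is allowed. -/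
inductive MergeStep {V : Type} [DecidableEq V] (D : Finset V → Finset V → ℝ)
    (better : ℝ → ℝ → Prop) :
    Multiset (ClusterTree V) → Multiset (ClusterTree V) → Prop where
  | step : ∀ (rest : Multiset (ClusterTree V)) (T1 T2 : ClusterTree V),
      (∀ (T1' T2' : ClusterTree V) (rest' : Multiset (ClusterTree V)),
          T1 ::ₘ T2 ::ₘ rest = T1' ::ₘ T2' ::ₘ rest' →
          better (D T1.leaves T2.leaves) (D T1'.leaves T2'.leaves)) →
      MergeStep D better (T1 ::ₘ T2 ::ₘ rest) (ClusterTree.node T1 T2 ::ₘ rest)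

/-- `T` is a possible output of the linkage algorithm with dissimilarity/similarity
measure `D` and preference `better`. -/
def IsLinkageOutput {V : Type} [Fintype V] [DecidableEq V]
    (D : Finset V → Finset V → ℝ) (better : ℝ → ℝ → Prop) (T : ClusterTree V) : Prop :=
  Relation.ReflTransGen (MergeStep D better) (initState V) {T}

/-- Average-linkage measure. -/
def avgDist {V : Type} (w : V → V → ℝ) (A B : Finset V) : ℝ :=
  cutWeight w A B / ((A.card : ℝ) * (B.card : ℝ))

/-- Single-linkage measure: `min_{x ∈ A, y ∈ B} w x y`. -/
def minLinkDist {V : Type} [DecidableEq V] (w : V → V → ℝ) (A B : Finset V) : ℝ :=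
  WithTop.untopD 0 (((A ×ˢ B).image fun p => w p.1 p.2).min)

/-- Complete-linkage measure: `max_{x ∈ A, y ∈ B} w x y`. -/
def maxLinkDist {V : Type} [DecidableEq V] (w : V → V → ℝ) (A B : Finset V) : ℝ :=
  WithBot.unbotD 0 (((A ×ˢ B).image fun p => w p.1 p.2).max)

/-! ### Cuts -/

section Cuts

variable {V : Type}

/-- `A ⊕ x` : add `x` to `A` if absent, remove it if present. -/
def symmDiffV [DecidableEq V] (A : Finset V) (x : V) : Finset V :=
  if x ∈ A then A.erase x else insert x A

/-- `(A, B)` is an `ε/|A ∪ B|`-locally-densest cut of the induced subgraph on `A ∪ B`. -/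
def IsLocallyDensestCut [DecidableEq V] (w : V → V → ℝ) (ε : ℝ) (A B : Finset V) : Prop :=
  ∀ x ∈ A ∪ B,
    cutWeight w (symmDiffV A x) (symmDiffV B x) /
        (((symmDiffV A x).card : ℝ) * ((symmDiffV B x).card : ℝ)) ≤
      (1 + ε / ((A ∪ B).card : ℝ)) *
        (cutWeight w A B / ((A.card : ℝ) * (B.card : ℝ)))

/-- Cluster trees obtained by recursively splitting along `ε/n`-locally-densest cuts. -/
def IsRecLocallyDensestCutTree [DecidableEq V] (w : V → V → ℝ) (ε : ℝ) :
    ClusterTree V → Prop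
  | ClusterTree.leaf _ => True
  | ClusterTree.node L R =>
      IsLocallyDensestCut w ε L.leaves R.leaves ∧
      IsRecLocallyDensestCutTree w ε L ∧ IsRecLocallyDensestCutTree w ε R

/-- Cluster trees obtained by recursively splitting along `φ`-approximate sparsest cuts. -/
def IsRecApproxSparsestCutTree [DecidableEq V] (w : V → V → ℝ) (φ : ℝ) :
    ClusterTree V → Prop
  | ClusterTree.leaf _ => True
  | ClusterTree.node L R =>
      (∀ S : Finset V, S ⊆ L.leaves ∪ R.leaves → S.Nonempty → S ⊂ L.leaves ∪ R.leaves →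
        cutWeight w L.leaves R.leaves / ((L.leaves.card : ℝ) * (R.leaves.card : ℝ)) ≤
          φ * (cutWeight w S ((L.leaves ∪ R.leaves) \ S) /
            ((S.card : ℝ) * (((L.leaves ∪ R.leaves) \ S).card : ℝ)))) ∧
      IsRecApproxSparsestCutTree w φ L ∧ IsRecApproxSparsestCutTree w φ R

/-- Cluster trees obtained by recursively splitting along exact sparsest cuts. -/
def IsRecSparsestCutTree [DecidableEq V] (w : V → V → ℝ) : ClusterTree V → Prop
  | ClusterTree.leaf _ => True
  | ClusterTree.node L R =>
      (∀ S : Finset V, S ⊆ L.leaves ∪ R.leaves → S.Nonempty → S ⊂ L.leaves ∪ R.leaves →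
        cutWeight w L.leaves R.leaves / ((L.leaves.card : ℝ) * (R.leaves.card : ℝ)) ≤
          cutWeight w S ((L.leaves ∪ R.leaves) \ S) /
            ((S.card : ℝ) * (((L.leaves ∪ R.leaves) \ S).card : ℝ))) ∧
      IsRecSparsestCutTree w L ∧ IsRecSparsestCutTree w R

/-- Cluster trees obtained by recursively splitting along exact densest cuts. -/
def IsRecDensestCutTree [DecidableEq V] (w : V → V → ℝ) : ClusterTree V → Prop
  | ClusterTree.leaf _ => True
  | ClusterTree.node L R =>
      (∀ S : Finset V, S ⊆ L.leaves ∪ R.leaves → S.Nonempty → S ⊂ L.leaves ∪ R.leaves →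
        cutWeight w S ((L.leaves ∪ R.leaves) \ S) /
            ((S.card : ℝ) * (((L.leaves ∪ R.leaves) \ S).card : ℝ)) ≤
          cutWeight w L.leaves R.leaves / ((L.leaves.card : ℝ) * (R.leaves.card : ℝ))) ∧
      IsRecDensestCutTree w L ∧ IsRecDensestCutTree w R

/-- Cluster trees produced by the bisection 2-Center algorithm (similarity setting). -/
def IsBisection2CenterTree [DecidableEq V] (w : V → V → ℝ) : ClusterTree V → Prop
  | ClusterTree.leaf _ => True
  | ClusterTree.node L R =>
      (∃ u ∈ L.leaves ∪ R.leaves, ∃ v ∈ L.leaves ∪ R.leaves, u ≠ v ∧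
        (∃ r : ℝ,
          (∀ x ∈ L.leaves ∪ R.leaves, r ≤ max (w x u) (w x v)) ∧
          (∀ u' ∈ L.leaves ∪ R.leaves, ∀ v' ∈ L.leaves ∪ R.leaves, u' ≠ v' →
            ∃ x ∈ L.leaves ∪ R.leaves, max (w x u') (w x v') ≤ r)) ∧
        L.leaves = (L.leaves ∪ R.leaves).filter fun x => w x v ≤ w x u) ∧
      IsBisection2CenterTree w L ∧ IsBisection2CenterTree w R

/-- Cluster trees produced by the bisection 2-Center algorithm (dissimilarity setting). -/
def IsBisection2CenterTreeDissim [DecidableEq V] (w : V → V → ℝ) : ClusterTree V → Prop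
  | ClusterTree.leaf _ => True
  | ClusterTree.node L R =>
      (∃ u ∈ L.leaves ∪ R.leaves, ∃ v ∈ L.leaves ∪ R.leaves, u ≠ v ∧
        (∃ r : ℝ,
          (∀ x ∈ L.leaves ∪ R.leaves, min (w x u) (w x v) ≤ r) ∧
          (∀ u' ∈ L.leaves ∪ R.leaves, ∀ v' ∈ L.leaves ∪ R.leaves, u' ≠ v' →
            ∃ x ∈ L.leaves ∪ R.leaves, r ≤ min (w x u') (w x v'))) ∧
        L.leaves = (L.leaves ∪ R.leaves).filter fun x => w x u ≤ w x v) ∧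
      IsBisection2CenterTreeDissim w L ∧ IsBisection2CenterTreeDissim w R

end Cuts

/-! ### Pivot algorithms -/

mutual
/-- Trees produced by the fast pivot algorithm (Algorithm 6 of CKMM):
pick a pivot `p`, split the other vertices into classes of equal similarity to `p`
(in strictly decreasing order of similarity), recurse, and attach along a spine. -/
inductive IsPivotTree {V : Type} [DecidableEq V] (w : V → V → ℝ) : ClusterTree V → Prop where
  | mk : ∀ (p : V) (T : ClusterTree V), PivotSpine w p T → IsPivotTree w T

/-- The spine of the pivot algorithm: `PivotSpine w p T` says that `T` is an iterated
union of the single-vertex tree on `p` with pivot trees of the similarity classes of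
`p`, attached in strictly decreasing order of similarity to `p`. -/
inductive PivotSpine {V : Type} [DecidableEq V] (w : V → V → ℝ) : V → ClusterTree V → Prop where
  | base : ∀ p : V, PivotSpine w p (ClusterTree.leaf p)
  | step : ∀ (p : V) (S T : ClusterTree V) (c : ℝ),
      PivotSpine w p S → IsPivotTree w T →
      (∀ v ∈ T.leaves, w p v = c) →
      (∀ u ∈ S.leaves, u ≠ p → c < w p u) →
      PivotSpine w p (ClusterTree.node S T)
end

mutual
/-- Trees produced by the robust pivot algorithm (Algorithm 7 of CKMM). -/
inductive IsRobustPivotTree {V : Type} [DecidableEq V] (w : V → V → ℝ) :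
    ClusterTree V → Prop where
  | mk : ∀ (p : V) (T : ClusterTree V), RobustPivotSpine w T.leaves p T →
      IsRobustPivotTree w T

/-- `RobustPivotSpine w U p T` : `T` is a prefix (a spine) of a run of the robust pivot
algorithm on the vertex set `U`, started at the pivot `p`.  At each step, `wi` is the
maximum weight of an edge in the cut `(Ṽ, U \ Ṽ)` (where `Ṽ` is the set of already
clustered vertices), and the next block is the least subset of `U \ Ṽ` closed under
adding any vertex having an edge of weight at least `wi` into the block or into `Ṽ`. -/
inductive RobustPivotSpine {V : Type} [DecidableEq V] (w : V → V → ℝ) :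
    Finset V → V → ClusterTree V → Prop where
  | base : ∀ (U : Finset V) (p : V), RobustPivotSpine w U p (ClusterTree.leaf p)
  | step : ∀ (U : Finset V) (p : V) (S T : ClusterTree V) (wi : ℝ),
      RobustPivotSpine w U p S →
      IsRobustPivotTree w T →
      (∃ p1 ∈ S.leaves, ∃ p2 ∈ U \ S.leaves, w p1 p2 = wi) →
      (∀ q1 ∈ S.leaves, ∀ q2 ∈ U \ S.leaves, w q1 q2 ≤ wi) →
      T.leaves ⊆ U \ S.leaves →
      (∀ u ∈ U \ S.leaves, (∃ v ∈ T.leaves ∪ S.leaves, wi ≤ w u v) → u ∈ T.leaves) →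
      (∀ C : Finset V, C ⊆ U \ S.leaves →
        (∀ u ∈ U \ S.leaves, (∃ v ∈ C ∪ S.leaves, wi ≤ w u v) → u ∈ C) →
        T.leaves ⊆ C) →
      RobustPivotSpine w U p (ClusterTree.node S T)
end

/-! ### Paths and caterpillars -/

/-- Attach the leaves from the list `l` one by one on top of `t` (a "spine"). -/
def spineTree {V : Type} : ClusterTree V → List V → ClusterTree V
  | t, [] => t
  | t, v :: vs => spineTree (ClusterTree.node t (ClusterTree.leaf v)) vs

/-- The unit-weight path on `n` vertices. -/
def pathW (n : ℕ) (i j : Fin n) : ℝ :=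
  if (i : ℕ) + 1 = (j : ℕ) ∨ (j : ℕ) + 1 = (i : ℕ) then 1 else 0

/-! ### Random graphs: hierarchical stochastic block model -/

/-- Index set for the potential edges of a graph on `Fin n`. -/
abbrev EdgeIdx (n : ℕ) := {p : Fin n × Fin n // p.1 < p.2}

/-- The (0/1) weight function of the random graph described by the edge
configuration `c`. -/
def configW {n : ℕ} (c : EdgeIdx n → Bool) (u v : Fin n) : ℝ :=
  if h : u < v then (if c ⟨(u, v), h⟩ then 1 else 0)
  else if h' : v < u then (if c ⟨(v, u), h'⟩ then 1 else 0)
  else 0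

/-- The probability of the edge configuration `c` when each edge `e` is present
independently with probability `q e`. -/
def configProb {n : ℕ} (q : Fin n → Fin n → ℝ) (c : EdgeIdx n → Bool) : ℝ :=
  ∏ e : EdgeIdx n, if c e then q e.val.1 e.val.2 else 1 - q e.val.1 e.val.2

/-- The expected cost `E[Γ(T) | ψ]` of a fixed cluster tree `T`, over the random
choice of the edges (with edge probabilities `q`). -/
def expectedCost {n : ℕ} (g : ℕ → ℕ → ℝ) (q : Fin n → Fin n → ℝ)
    (T : ClusterTree (Fin n)) : ℝ :=
  ∑ c : EdgeIdx n → Bool, configProb q c * treeCost (configW c) g T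

/-- The (fixed, size-independent) data of a hierarchical stochastic block model with
`k` bottom-level clusters: a generating tree `Ttil` with weights `Wtil` in `(0,1)`
(the graph `G̃ₖ` on `k` vertices generated from an ultrametric), and intra-cluster
probabilities `p i ∈ (0,1]` exceeding the weight of the parent of leaf `i`. -/
structure HSBM (k : ℕ) where
  Ttil : ClusterTree (Fin k)
  Wtil : ClusterTree (Fin k) → ℝ
  p : Fin k → ℝ
  ttil_isClusterTree : IsClusterTree Ttil
  wtil_pos : ∀ L R, IsSubtreeOf (ClusterTree.node L R) Ttil →
    0 < Wtil (ClusterTree.node L R)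
  wtil_lt_one : ∀ L R, IsSubtreeOf (ClusterTree.node L R) Ttil →
    Wtil (ClusterTree.node L R) < 1
  wtil_mono : ∀ L R, IsSubtreeOf (ClusterTree.node L R) Ttil →
    ∀ s, IsSubtreeOf s L ∨ IsSubtreeOf s R → Wtil (ClusterTree.node L R) ≤ Wtil s
  p_pos : ∀ i, 0 < p i
  p_le_one : ∀ i, p i ≤ 1
  p_gt_parent : ∀ L R, IsSubtreeOf (ClusterTree.node L R) Ttil →
    ∀ i : Fin k, L = ClusterTree.leaf i ∨ R = ClusterTree.leaf i →
      Wtil (ClusterTree.node L R) < p i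

/-- The edge probabilities of the HSBM `M` with sparsity `α`, given the assignment
`ψ` of vertices to bottom-level clusters.  These are also the edge weights of the
expected graph `Ḡ`. -/
def HSBM.edgeProb {k : ℕ} (M : HSBM k) (α : ℝ) {n : ℕ} (ψ : Fin n → Fin k) :
    Fin n → Fin n → ℝ := fun u v =>
  if ψ u = ψ v then α * M.p (ψ u)
  else α * M.Wtil (lcaSubtree M.Ttil (ψ u) (ψ v))

/-- The probability of the sample `ω = (ψ, c)` (labels and edges) of the HSBM `M`
with label proportions `f` and sparsity `α`. -/
def hsbmProb {k : ℕ} (M : HSBM k) (f : Fin k → ℝ) (α : ℝ) {n : ℕ}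
    (ω : (Fin n → Fin k) × (EdgeIdx n → Bool)) : ℝ :=
  (∏ v : Fin n, f (ω.1 v)) * configProb (M.edgeProb α ω.1) ω.2

/-- The common cost `κ(n)` of all cluster trees of the unit-weight clique on `n`
vertices (computed on the caterpillar tree). -/
def cliqueTreeCost (g : ℕ → ℕ → ℝ) (n : ℕ) : ℝ :=
  ∑ i ∈ Finset.range n, (i : ℝ) * g i 1

/-- The smoothness property: `max {g(n₁,n₂) : n₁+n₂ = n} = O(κ(n)/n²)`. -/
def SmoothCost (g : ℕ → ℕ → ℝ) : Prop :=
  ∃ C : ℝ, 0 < C ∧ ∀ n1 n2 : ℕ, 1 ≤ n1 → 1 ≤ n2 →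
    g n1 n2 * (((n1 + n2 : ℕ) : ℝ)) ^ 2 ≤ C * cliqueTreeCost g (n1 + n2)

end

/-! ### Auxiliary development for statement5 -/

namespace ALAux

set_option linter.unusedSectionVars false

noncomputable section

open ClusterTree

variable {V : Type} [DecidableEq V]

lemma leavesList_ne_nil (T : ClusterTree V) : T.leavesList ≠ [] := by
  induction T with
  | leaf v => simp [leavesList]
  | node L R ihL ihR => simp [leavesList, ihL]

lemma leaves_node (L R : ClusterTree V) :
    (ClusterTree.node L R).leaves = L.leaves ∪ R.leaves := by
  simp [ClusterTree.leaves, leavesList, List.toFinset_append]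

lemma leaves_card_pos (T : ClusterTree V) : 0 < T.leaves.card := by
  rw [Finset.card_pos, ClusterTree.leaves]
  obtain ⟨a, ha⟩ := List.exists_mem_of_ne_nil _ (leavesList_ne_nil T)
  exact ⟨a, List.mem_toFinset.2 ha⟩

lemma cutWeight_nonneg (w : V → V → ℝ) (hnonneg : ∀ u v, 0 ≤ w u v) (A B : Finset V) :
    0 ≤ cutWeight w A B :=
  Finset.sum_nonneg fun a _ => Finset.sum_nonneg fun b _ => hnonneg a b

lemma cutWeight_comm (w : V → V → ℝ) (hsym : ∀ u v, w u v = w v u) (A B : Finset V) :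
    cutWeight w A B = cutWeight w B A := by
  rw [cutWeight, cutWeight, Finset.sum_comm]
  exact Finset.sum_congr rfl fun a _ => Finset.sum_congr rfl fun b _ => hsym _ _

lemma cutWeight_union_left (w : V → V → ℝ) {A B : Finset V} (h : Disjoint A B)
    (C : Finset V) : cutWeight w (A ∪ B) C = cutWeight w A C + cutWeight w B C := by
  rw [cutWeight, Finset.sum_union h]; rfl

/-- All leaves in a collection of trees, as a multiset. -/
def mleaves (S : Multiset (ClusterTree V)) : Multiset V :=
  (S.map fun t => (t.leavesList : Multiset V)).sum

lemma mleaves_cons (a : ClusterTree V) (s : Multiset (ClusterTree V)) :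
    mleaves (a ::ₘ s) = (a.leavesList : Multiset V) + mleaves s := by
  simp [mleaves]

lemma nodup_of_mem {s : Multiset (ClusterTree V)} (h : (mleaves s).Nodup)
    {D : ClusterTree V} (hD : D ∈ s) : D.leavesList.Nodup := by
  induction s using Multiset.induction with
  | empty => simp at hD
  | cons a s ih =>
    rw [mleaves_cons, Multiset.nodup_add] at h
    rcases Multiset.mem_cons.1 hD with rfl | hD
    · exact (Multiset.coe_nodup).1 h.1
    · exact ih h.2.1 hD

lemma card_mleaves {s : Multiset (ClusterTree V)} (h : (mleaves s).Nodup) :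
    Multiset.card (mleaves s) = (s.map fun D => D.leaves.card).sum := by
  induction s using Multiset.induction with
  | empty => simp [mleaves]
  | cons a s ih =>
    rw [mleaves_cons, Multiset.nodup_add] at h
    rw [mleaves_cons, Multiset.map_cons, Multiset.sum_cons, Multiset.card_add,
      ← ih h.2.1, Multiset.coe_card]
    congr 1
    exact (List.toFinset_card_of_nodup ((Multiset.coe_nodup).1 h.1)).symm ▸
      (List.toFinset_card_of_nodup ((Multiset.coe_nodup).1 h.1))

variable [Fintype V]

/-- Potential contribution of a pair of trees. -/
def phi (w : V → V → ℝ) (A B : ClusterTree V) : ℝ :=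
  ((A.leaves.card + B.leaves.card + Fintype.card V : ℕ) : ℝ) / 2
    * cutWeight w A.leaves B.leaves

lemma phi_comm (w : V → V → ℝ) (hsym : ∀ u v, w u v = w v u) (A B : ClusterTree V) :
    phi w A B = phi w B A := by
  rw [phi, phi, cutWeight_comm w hsym]
  push_cast
  ring

/-- Ordered-pair potential. -/
def Qp (w : V → V → ℝ) (S : Multiset (ClusterTree V)) : ℝ :=
  (S.map fun A => (S.map fun B => phi w A B).sum).sum - (S.map fun A => phi w A A).sum

lemma Qp_cons (w : V → V → ℝ) (a : ClusterTree V) (s : Multiset (ClusterTree V)) :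
    Qp w (a ::ₘ s) = Qp w s + (s.map fun b => phi w a b).sum
      + (s.map fun b => phi w b a).sum := by
  simp only [Qp, Multiset.map_cons, Multiset.sum_cons]
  rw [Multiset.sum_map_add]
  ring

/-- Unordered-pair potential. -/
def fpot (w : V → V → ℝ) (S : Multiset (ClusterTree V)) : ℝ := Qp w S / 2

lemma fpot_cons (w : V → V → ℝ) (hsym : ∀ u v, w u v = w v u) (a : ClusterTree V)
    (s : Multiset (ClusterTree V)) :
    fpot w (a ::ₘ s) = fpot w s + (s.map fun b => phi w a b).sum := by
  rw [fpot, fpot, Qp_cons,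
    show (s.map fun b => phi w b a) = s.map fun b => phi w a b from
      Multiset.map_congr rfl fun b _ => phi_comm w hsym b a]
  ring

/-- Sum of costs of trees in a state. -/
def costSum (w : V → V → ℝ) (S : Multiset (ClusterTree V)) : ℝ :=
  (S.map (dasguptaCost w)).sum

lemma step_key (w : V → V → ℝ) (hsym : ∀ u v, w u v = w v u)
    (hnonneg : ∀ u v, 0 ≤ w u v) {S S' : Multiset (ClusterTree V)}
    (h : MergeStep (avgDist w) (fun a b => a ≤ b) S S')
    (hinv : mleaves S = Finset.univ.val) :
    mleaves S' = Finset.univ.val ∧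
      costSum w S + fpot w S ≤ costSum w S' + fpot w S' := by
  obtain ⟨rest, A, B, hmin⟩ := h
  have hml : mleaves (ClusterTree.node A B ::ₘ rest)
      = mleaves (A ::ₘ B ::ₘ rest) := by
    simp [mleaves_cons, leavesList, ← Multiset.coe_add, add_assoc]
  refine ⟨hml.trans hinv, ?_⟩
  -- notation
  set a := A.leaves.card with ha
  set b := B.leaves.card with hb
  have hND : (mleaves (A ::ₘ B ::ₘ rest)).Nodup := by
    rw [hinv]; exact Finset.univ.nodup
  have hndA : A.leavesList.Nodup := nodup_of_mem hND (by simp)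
  have hndB : B.leavesList.Nodup := nodup_of_mem hND (by simp)
  -- disjointness of A and B leaves
  have hdisj : Disjoint A.leaves B.leaves := by
    rw [mleaves_cons, mleaves_cons, Multiset.nodup_add] at hND
    have h2 := hND.2.2
    rw [Finset.disjoint_left]
    intro x hxA hxB
    have hxA' : x ∈ (A.leavesList : Multiset V) := by
      simpa using List.mem_toFinset.1 hxA
    have hxB' : x ∈ (B.leavesList : Multiset V) + mleaves rest := by
      have : x ∈ (B.leavesList : Multiset V) := by
        simpa using List.mem_toFinset.1 hxB
      exact Multiset.mem_add.2 (Or.inl this)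
    exact (Multiset.disjoint_left.1 h2) hxA' hxB'
  -- cardinalities
  have hcardM : (ClusterTree.node A B).leaves.card = a + b := by
    rw [leaves_node, Finset.card_union_of_disjoint hdisj]
  have hcards : a + b + (rest.map fun D => D.leaves.card).sum = Fintype.card V := by
    have h1 : Multiset.card (mleaves (A ::ₘ B ::ₘ rest)) = Fintype.card V := by
      rw [hinv]; exact Finset.card_univ
    rw [card_mleaves hND] at h1
    simp only [Multiset.map_cons, Multiset.sum_cons] at h1
    omega
  set m : ℕ := (rest.map fun D => D.leaves.card).sum with hm
  -- the minimality bounds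
  have hapos : (0:ℝ) < a := by exact_mod_cast leaves_card_pos A
  have hbpos : (0:ℝ) < b := by exact_mod_cast leaves_card_pos B
  have hWAB : 0 ≤ cutWeight w A.leaves B.leaves := cutWeight_nonneg w hnonneg _ _
  have hkey : ∀ D ∈ rest,
      ((D.leaves.card : ℝ)) * cutWeight w A.leaves B.leaves ≤
        (b : ℝ) / 2 * cutWeight w A.leaves D.leaves
          + (a : ℝ) / 2 * cutWeight w B.leaves D.leaves := by
    intro D hD
    have hdpos : (0:ℝ) < D.leaves.card := by exact_mod_cast leaves_card_pos D
    obtain ⟨e, he⟩ : ∃ e, rest = D ::ₘ e := ⟨rest.erase D, (Multiset.cons_erase hD).symm⟩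
    have hAD : avgDist w A.leaves B.leaves ≤ avgDist w A.leaves D.leaves := by
      refine hmin A D (B ::ₘ e) ?_
      rw [he]
      congr 1
      exact Multiset.cons_swap B D e
    have hBD : avgDist w A.leaves B.leaves ≤ avgDist w B.leaves D.leaves := by
      refine hmin B D (A ::ₘ e) ?_
      rw [he, Multiset.cons_swap A B, Multiset.cons_swap A D]
    rw [avgDist, avgDist, div_le_div_iff₀ (by positivity) (by positivity)] at hAD
    rw [avgDist, avgDist, div_le_div_iff₀ (by positivity) (by positivity)] at hBD
    have h1 : ((D.leaves.card : ℝ)) * cutWeight w A.leaves B.leaves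
        ≤ (b : ℝ) * cutWeight w A.leaves D.leaves := by
      nlinarith [hAD, hapos, hbpos, hdpos]
    have h2 : ((D.leaves.card : ℝ)) * cutWeight w A.leaves B.leaves
        ≤ (a : ℝ) * cutWeight w B.leaves D.leaves := by
      nlinarith [hBD, hapos, hbpos, hdpos]
    linarith
  -- reduce via fpot_cons / costSum
  have hcsS : costSum w (A ::ₘ B ::ₘ rest)
      = dasguptaCost w A + dasguptaCost w B + costSum w rest := by
    simp [costSum, Multiset.map_cons, Multiset.sum_cons]; ring
  have hcsS' : costSum w (ClusterTree.node A B ::ₘ rest)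
      = ((a + b : ℕ) : ℝ) * cutWeight w A.leaves B.leaves
        + dasguptaCost w A + dasguptaCost w B + costSum w rest := by
    simp [costSum, Multiset.map_cons, Multiset.sum_cons, dasguptaCost]
    exact Or.inl rfl
  have hfS : fpot w (A ::ₘ B ::ₘ rest) = fpot w rest
      + (rest.map fun D => phi w B D).sum + phi w A B
      + (rest.map fun D => phi w A D).sum := by
    rw [fpot_cons w hsym, fpot_cons w hsym, Multiset.map_cons, Multiset.sum_cons]
    ring
  have hfS' : fpot w (ClusterTree.node A B ::ₘ rest) = fpot w rest
      + (rest.map fun D => phi w (ClusterTree.node A B) D).sum := by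
    rw [fpot_cons w hsym]
  -- per-D expansion of phi (node A B) D
  have hphiM : ∀ D ∈ rest, phi w (ClusterTree.node A B) D
      = phi w A D + phi w B D
        + ((b : ℝ) / 2 * cutWeight w A.leaves D.leaves
          + (a : ℝ) / 2 * cutWeight w B.leaves D.leaves) := by
    intro D _
    rw [phi, phi, phi, hcardM, leaves_node, cutWeight_union_left w hdisj]
    push_cast
    ring
  have hsumM : (rest.map fun D => phi w (ClusterTree.node A B) D).sum
      = (rest.map fun D => phi w A D).sum + (rest.map fun D => phi w B D).sum
        + (rest.map fun D => (b : ℝ) / 2 * cutWeight w A.leaves D.leaves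
            + (a : ℝ) / 2 * cutWeight w B.leaves D.leaves).sum := by
    rw [← Multiset.sum_map_add, ← Multiset.sum_map_add]
    exact Multiset.map_congr rfl hphiM ▸ rfl
  -- the crucial sum lower bound
  have hlow : ((m : ℝ)) * cutWeight w A.leaves B.leaves
      ≤ (rest.map fun D => (b : ℝ) / 2 * cutWeight w A.leaves D.leaves
          + (a : ℝ) / 2 * cutWeight w B.leaves D.leaves).sum := by
    have h1 : (rest.map fun D => ((D.leaves.card : ℝ))
        * cutWeight w A.leaves B.leaves).sum
        ≤ (rest.map fun D => (b : ℝ) / 2 * cutWeight w A.leaves D.leaves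
            + (a : ℝ) / 2 * cutWeight w B.leaves D.leaves).sum :=
      Multiset.sum_map_le_sum_map _ _ hkey
    have h2 : (rest.map fun D => ((D.leaves.card : ℝ))
        * cutWeight w A.leaves B.leaves).sum
        = ((m : ℝ)) * cutWeight w A.leaves B.leaves := by
      rw [Multiset.sum_map_mul_right]
      congr 1
      rw [hm, Nat.cast_multiset_sum, Multiset.map_map]
      rfl
    linarith [h1, h2]
  -- final arithmetic
  rw [hcsS, hcsS', hfS, hfS', hsumM]
  have hphiAB : phi w A B
      = ((a + b + Fintype.card V : ℕ) : ℝ) / 2 * cutWeight w A.leaves B.leaves := rfl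
  have hn : ((Fintype.card V : ℕ) : ℝ) = (a : ℝ) + b + m := by
    exact_mod_cast congrArg (Nat.cast : ℕ → ℝ) hcards.symm
  rw [hphiAB]
  push_cast
  push_cast at hn
  nlinarith [hlow, hWAB]

/-- Upper bound on the cost of any nodup-leaved tree. -/
lemma dasgupta_le (w : V → V → ℝ) (hsym : ∀ u v, w u v = w v u)
    (hnonneg : ∀ u v, 0 ≤ w u v) :
    ∀ T' : ClusterTree V, T'.leavesList.Nodup →
      dasguptaCost w T' ≤ (Fintype.card V : ℝ) * innerWeight w T'.leaves / 2 := by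
  intro T'
  induction T' with
  | leaf v =>
    intro _
    simp only [dasguptaCost]
    have : 0 ≤ innerWeight w (ClusterTree.leaf v).leaves :=
      Finset.sum_nonneg fun a _ => Finset.sum_nonneg fun b _ => hnonneg a b
    positivity
  | node L R ihL ihR =>
    intro hnd
    rw [leavesList, List.nodup_append] at hnd
    obtain ⟨hndL, hndR, hdis⟩ := hnd
    have hdisj : Disjoint L.leaves R.leaves := by
      rw [Finset.disjoint_left]
      intro x hxL hxR
      exact hdis x (List.mem_toFinset.1 hxL) x (List.mem_toFinset.1 hxR) rfl
    have hinner : innerWeight w ((ClusterTree.node L R).leaves)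
        = innerWeight w L.leaves + innerWeight w R.leaves
          + 2 * cutWeight w L.leaves R.leaves := by
      rw [leaves_node, innerWeight, Finset.sum_union hdisj]
      have hL : ∀ x ∈ L.leaves, ∑ y ∈ L.leaves ∪ R.leaves, w x y
          = ∑ y ∈ L.leaves, w x y + ∑ y ∈ R.leaves, w x y :=
        fun x _ => Finset.sum_union hdisj
      have hR : ∀ x ∈ R.leaves, ∑ y ∈ L.leaves ∪ R.leaves, w x y
          = ∑ y ∈ L.leaves, w x y + ∑ y ∈ R.leaves, w x y :=
        fun x _ => Finset.sum_union hdisj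
      rw [Finset.sum_congr rfl hL, Finset.sum_congr rfl hR,
        Finset.sum_add_distrib, Finset.sum_add_distrib]
      have : (∑ x ∈ R.leaves, ∑ y ∈ L.leaves, w x y) = cutWeight w L.leaves R.leaves := by
        rw [← cutWeight_comm w hsym]; rfl
      rw [this]
      rw [innerWeight, innerWeight, cutWeight]
      ring
    have hcard : (L.leaves.card : ℝ) + R.leaves.card ≤ Fintype.card V := by
      have := Finset.card_le_univ (L.leaves ∪ R.leaves)
      rw [Finset.card_union_of_disjoint hdisj] at this
      exact_mod_cast this
    have hcut : 0 ≤ cutWeight w L.leaves R.leaves := cutWeight_nonneg w hnonneg _ _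
    have h1 := ihL hndL
    have h2 := ihR hndR
    simp only [dasguptaCost]
    rw [hinner]
    push_cast
    nlinarith [h1, h2, hcut, hcard]

end

end ALAux


/-- restated. -/
theorem statement5 {V : Type} [Fintype V] [DecidableEq V] (w : V → V → ℝ)
    (hsym : ∀ u v, w u v = w v u) (hnonneg : ∀ u v, 0 ≤ w u v) (hdiag : ∀ v, w v v = 0)
    (T : ClusterTree V) (hout : IsLinkageOutput (avgDist w) (fun a b => a ≤ b) T) :
    (Fintype.card V : ℝ) * totalWeight w / 2 ≤ dasguptaCost w T ∧
    ∀ T' : ClusterTree V, IsClusterTree T' →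
      dasguptaCost w T' / 2 ≤ dasguptaCost w T := by
  have htw : 0 ≤ totalWeight w := by
    rw [totalWeight]
    have : 0 ≤ ∑ u : V, ∑ v : V, w u v :=
      Finset.sum_nonneg fun u _ => Finset.sum_nonneg fun v _ => hnonneg u v
    linarith
  -- the invariant along the run
  have hstep : ∀ S' : Multiset (ClusterTree V),
      Relation.ReflTransGen (MergeStep (avgDist w) (fun a b => a ≤ b))
        (initState V) S' →
      ALAux.mleaves S' = Finset.univ.val ∧
        ALAux.costSum w (initState V) + ALAux.fpot w (initState V)
          ≤ ALAux.costSum w S' + ALAux.fpot w S' := by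
    intro S' h
    induction h with
    | refl =>
      refine ⟨?_, le_refl _⟩
      rw [initState, ALAux.mleaves, Multiset.map_map]
      simp only [Function.comp_def, ClusterTree.leavesList]
      exact Multiset.sum_map_singleton _
    | tail h1 hstep ih =>
      obtain ⟨hm, hle⟩ := ih
      obtain ⟨hm', hle'⟩ := ALAux.step_key w hsym hnonneg hstep hm
      exact ⟨hm', hle.trans hle'⟩
  obtain ⟨_, hrun⟩ := hstep _ hout
  -- evaluate the endpoints
  have hphi : ∀ u v : V, ALAux.phi w (ClusterTree.leaf u) (ClusterTree.leaf v)
      = ((Fintype.card V : ℝ) + 2) / 2 * w u v := by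
    intro u v
    have hl : ∀ x : V, (ClusterTree.leaf x : ClusterTree V).leaves = {x} := fun x => by
      simp [ClusterTree.leaves, ClusterTree.leavesList]
    rw [ALAux.phi, hl, hl, cutWeight]
    simp only [Finset.card_singleton, Finset.sum_singleton]
    push_cast
    ring
  have hcs0 : ALAux.costSum w (initState V) = 0 := by
    rw [initState, ALAux.costSum, Multiset.map_map]
    simp [Function.comp, dasguptaCost]
  have hf0 : ALAux.fpot w (initState V)
      = ((Fintype.card V : ℝ) + 2) / 2 * totalWeight w := by
    rw [ALAux.fpot, ALAux.Qp, initState, Multiset.map_map, Multiset.map_map]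
    simp only [Function.comp, Multiset.map_map, hphi]
    have hd : ∀ u : V, ((Fintype.card V : ℝ) + 2) / 2 * w u u = 0 := by
      intro u; rw [hdiag]; ring
    simp only [hd]
    rw [show (Finset.univ.val.map fun _ : V => (0:ℝ)).sum = 0 by
      simp]
    have e1 : (Finset.univ.val.map fun u : V =>
        (Finset.univ.val.map fun v : V => ((Fintype.card V : ℝ) + 2) / 2 * w u v).sum).sum
        = ∑ u : V, ∑ v : V, ((Fintype.card V : ℝ) + 2) / 2 * w u v := rfl
    rw [e1, totalWeight]
    rw [show (∑ u : V, ∑ v : V, ((Fintype.card V : ℝ) + 2) / 2 * w u v)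
        = ((Fintype.card V : ℝ) + 2) / 2 * ∑ u : V, ∑ v : V, w u v by
      rw [Finset.mul_sum]
      exact Finset.sum_congr rfl fun u _ => (Finset.mul_sum _ _ _).symm]
    ring
  have hcsT : ALAux.costSum w ({T} : Multiset (ClusterTree V)) = dasguptaCost w T := by
    simp [ALAux.costSum]
  have hfT : ALAux.fpot w ({T} : Multiset (ClusterTree V)) = 0 := by
    simp [ALAux.fpot, ALAux.Qp]
  rw [hcs0, hf0, hcsT, hfT] at hrun
  have hpart1 : (Fintype.card V : ℝ) * totalWeight w / 2 ≤ dasguptaCost w T := by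
    nlinarith [hrun, htw]
  refine ⟨hpart1, ?_⟩
  intro T' hT'
  obtain ⟨hnd, hcover⟩ := hT'
  have hub := ALAux.dasgupta_le w hsym hnonneg T' hnd
  rw [hcover] at hub
  have hiw : innerWeight w (Finset.univ : Finset V) = 2 * totalWeight w := by
    rw [innerWeight, totalWeight]; ring
  rw [hiw] at hub
  nlinarith [hub, hpart1, htw]
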